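/- arXiv:2309.13804 — 6 statements merged into one kernel-verified Lean document; each statement's English description precedes it below -/
import Mathlib

section
/- Let q be a prime power, F_q a finite field with q elements, and n ≥ 1. For every symmetric function f : F_q^n → F_q there exists a polynomial F ∈ F_q[E_1,...,E_n] in which every variable occurs with degree strictly less than q, such that for all a ∈ F_q^n, f(a) = F(e_1(a),...,e_n(a)). (Equivalently, the substitution homomorphism Φ from polynomials in E_1,...,E_n with all variable degrees < q onto the symmetric functions S(q,n) is surjective.) -/
open MvPolynomial

lemma ofFn_perm_exists {α : Type*} : ∀ {n : ℕ} {a b : Fin n → α},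
    (List.ofFn a).Perm (List.ofFn b) → ∃ σ : Equiv.Perm (Fin n), a ∘ σ = b := by
  intro n
  induction n with
  | zero => exact fun {a b} _ => ⟨1, funext fun i => i.elim0⟩
  | succ n ih =>
    intro a b h
    have hb0 : b 0 ∈ List.ofFn a := h.mem_iff.2 (List.mem_ofFn.2 ⟨0, rfl⟩)
    obtain ⟨i, hi⟩ := List.mem_ofFn.1 hb0
    set τ := Equiv.swap (0 : Fin (n+1)) i with hτ
    have h2 : (List.ofFn (a ∘ τ)).Perm (List.ofFn b) := (τ.ofFn_comp_perm a).trans h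
    rw [List.ofFn_succ, List.ofFn_succ] at h2
    have h0 : (a ∘ τ) 0 = b 0 := by simp [hτ, Equiv.swap_apply_left, hi]
    rw [h0] at h2
    obtain ⟨σ', hσ'⟩ := ih h2.cons_inv
    refine ⟨(Equiv.Perm.decomposeFin.symm (0, σ')).trans τ, funext fun x => ?_⟩
    refine Fin.cases ?_ (fun x => ?_) x
    · simpa [hτ, Equiv.swap_apply_left, hi] using h0
    · have := congrFun hσ' x
      simpa [Equiv.swap_self] using this

/-- Every symmetric function `f : F_q^n → F_q` is represented by a polynomial in the elementary
symmetric polynomials, with all variable degrees `< q`. -/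
theorem stmt2 (q n : ℕ) (hq : IsPrimePow q) (hn : 1 ≤ n)
    (F : Type) [Field F] [Fintype F] (hF : Fintype.card F = q)
    (f : (Fin n → F) → F)
    (hf : ∀ (σ : Equiv.Perm (Fin n)) (a : Fin n → F), f (a ∘ σ) = f a) :
    ∃ P : MvPolynomial (Fin n) F,
      (∀ i : Fin n, P.degreeOf i < q) ∧
      ∀ a : Fin n → F,
        f a = eval (fun k : Fin n => eval a (esymm (Fin n) F ((k : ℕ) + 1))) P := by
  classical
  set E : (Fin n → F) → (Fin n → F) :=
    fun a k => eval a (esymm (Fin n) F ((k : ℕ) + 1)) with hE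
  -- evaluation of esymm as multiset esymm
  have heval : ∀ (a : Fin n → F) (m : ℕ),
      eval a (esymm (Fin n) F m) = (Finset.univ.val.map a).esymm m := by
    intro a m
    have := aeval_esymm_eq_multiset_esymm (R := F) (S := F) (σ := Fin n) m a
    rw [← this, aeval_def, Algebra.algebraMap_self]
    rfl
  -- key: E a = E b implies f a = f b
  have key : ∀ a b : Fin n → F, E a = E b → f a = f b := by
    intro a b hEab
    have hs : ∀ j ≤ n, (Finset.univ.val.map a).esymm j = (Finset.univ.val.map b).esymm j := by
      intro j hj
      rcases Nat.eq_zero_or_pos j with h0 | h1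
      · subst h0; simp [Multiset.esymm, Multiset.powersetCard_zero_left]
      · have hj1 : j - 1 < n := by omega
        have := congrFun hEab ⟨j - 1, hj1⟩
        simp only [hE] at this
        rw [heval, heval] at this
        simpa [Nat.sub_add_cancel h1] using this
    have hca : Multiset.card (Finset.univ.val.map a) = n := by simp
    have hcb : Multiset.card (Finset.univ.val.map b) = n := by simp
    have hprod : ((Finset.univ.val.map a).map fun t => Polynomial.X - Polynomial.C t).prod
        = ((Finset.univ.val.map b).map fun t => Polynomial.X - Polynomial.C t).prod := by
      rw [Multiset.prod_X_sub_X_eq_sum_esymm, Multiset.prod_X_sub_X_eq_sum_esymm, hca, hcb]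
      refine Finset.sum_congr rfl fun j hj => ?_
      rw [hs j (by simpa using Nat.lt_succ_iff.1 (Finset.mem_range.1 hj))]
    have hm : Finset.univ.val.map a = Finset.univ.val.map b := by
      have := congrArg Polynomial.roots hprod
      rwa [Polynomial.roots_multiset_prod_X_sub_C, Polynomial.roots_multiset_prod_X_sub_C] at this
    rw [Fin.univ_val_map, Fin.univ_val_map, Multiset.coe_eq_coe] at hm
    obtain ⟨σ, hσ⟩ := ofFn_perm_exists hm
    rw [← hσ, hf]
  -- define g
  set g : (Fin n → F) → F := fun c => if h : ∃ a, E a = c then f h.choose else 0 with hg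
  have hgE : ∀ a : Fin n → F, g (E a) = f a := by
    intro a
    have hex : ∃ a', E a' = E a := ⟨a, rfl⟩
    show (if h : ∃ a', E a' = E a then f h.choose else 0) = f a
    rw [dif_pos hex]
    exact key _ _ hex.choose_spec
  -- interpolation polynomial
  refine ⟨∑ c : Fin n → F, MvPolynomial.C (g c) * MvPolynomial.indicator c, ?_, ?_⟩
  · intro i
    have hmem : (∑ c : Fin n → F, MvPolynomial.C (g c) * MvPolynomial.indicator c)
        ∈ restrictDegree (Fin n) F (Fintype.card F - 1) := by
      refine Submodule.sum_mem _ fun c _ => ?_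
      rw [← MvPolynomial.smul_eq_C_mul]
      exact Submodule.smul_mem _ _ (MvPolynomial.indicator_mem_restrictDegree c)
    rw [mem_restrictDegree] at hmem
    have hdeg := (degreeOf_le_iff).2 fun d hd => hmem d hd i
    have hq0 : 0 < q := hq.pos
    calc MvPolynomial.degreeOf i _ ≤ Fintype.card F - 1 := hdeg
    _ < q := by omega
  · intro a
    rw [map_sum]
    have : ∀ c ∈ Finset.univ, c ≠ E a →
        eval (E a) (MvPolynomial.C (g c) * MvPolynomial.indicator c) = 0 := by
      intro c _ hc
      rw [eval_mul, eval_C, MvPolynomial.eval_indicator_apply_eq_zero _ _ (Ne.symm hc), mul_zero]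
    rw [Finset.sum_eq_single_of_mem (E a) (Finset.mem_univ _) this, eval_mul, eval_C,
      MvPolynomial.eval_indicator_apply_eq_one, mul_one, hgE]
end

section
/- Let q be a prime power, F_q a finite field with q elements, and n ≥ 1. The set I(q,n) of polynomials P ∈ F_q[E_1,...,E_n] in which every variable occurs with degree strictly less than q and such that P(e_1(a),...,e_n(a)) = 0 for all a ∈ F_q^n, is an F_q-linear subspace of dimension q^n − C(n+q-1, n). -/
open MvPolynomial

lemma multiset_exists_ofFn {α : Type*} {n : ℕ} (m : Multiset α) (h : Multiset.card m = n) :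
    ∃ a : Fin n → α, Multiset.map a Finset.univ.val = m := by
  have hl : m.toList.length = n := by rw [Multiset.length_toList, h]
  refine ⟨fun i => m.toList.get (Fin.cast hl.symm i), ?_⟩
  rw [Fin.univ_val_map]
  have : List.ofFn (fun i : Fin n => m.toList.get (Fin.cast hl.symm i)) = m.toList := by
    apply List.ext_get (by simp [hl])
    intro i h1 h2
    simp
  rw [this, Multiset.coe_toList]

open Polynomial in
lemma multiset_esymm_inj {F : Type*} [Field F] {n : ℕ} (m₁ m₂ : Multiset F)
    (h₁ : Multiset.card m₁ = n) (h₂ : Multiset.card m₂ = n)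
    (h : ∀ k : Fin n, m₁.esymm ((k : ℕ) + 1) = m₂.esymm ((k : ℕ) + 1)) : m₁ = m₂ := by
  have key : (m₁.map fun t => Polynomial.X - Polynomial.C t).prod = (m₂.map fun t => Polynomial.X - Polynomial.C t).prod := by
    ext j
    rcases le_or_gt j n with hj | hj
    · rw [Multiset.prod_X_sub_C_coeff _ (h₁ ▸ hj), Multiset.prod_X_sub_C_coeff _ (h₂ ▸ hj),
        h₁, h₂]
      rcases Nat.eq_zero_or_pos (n - j) with h0 | h0
      · rw [h0]
        simp [Multiset.esymm, Multiset.powersetCard_zero_left]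
      · have hk : n - j - 1 < n := by omega
        have hh := h ⟨n - j - 1, hk⟩
        simp only at hh
        rw [show n - j = (n - j - 1) + 1 by omega, hh]
    · rw [Polynomial.coeff_eq_zero_of_natDegree_lt, Polynomial.coeff_eq_zero_of_natDegree_lt]
      · rw [Polynomial.natDegree_multiset_prod_X_sub_C_eq_card, h₂]; exact hj
      · rw [Polynomial.natDegree_multiset_prod_X_sub_C_eq_card, h₁]; exact hj
  have hr := congrArg Polynomial.roots key
  rwa [Polynomial.roots_multiset_prod_X_sub_C, Polynomial.roots_multiset_prod_X_sub_C] at hr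

lemma eval_esymm_eq_multiset {F : Type*} [CommSemiring F] {n : ℕ} (a : Fin n → F) (k : ℕ) :
    MvPolynomial.eval a (esymm (Fin n) F k) = (Finset.univ.val.map a).esymm k := by
  simp only [MvPolynomial.esymm, map_sum, map_prod, eval_X, Finset.esymm_map_val]

/-- The space `I(q,n)` of algebraic relations among the elementary symmetric polynomial
functions over `F_q` (polynomials with all variable degrees `< q` vanishing on all values of
the elementary symmetric polynomials) is an `F_q`-subspace of dimension
`q ^ n - (n + q - 1).choose n`. -/
theorem stmt3 (q n : ℕ) (hq : IsPrimePow q) (hn : 1 ≤ n)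
    (F : Type) [Field F] [Fintype F] (hF : Fintype.card F = q) :
    ∃ I : Submodule F (MvPolynomial (Fin n) F),
      (∀ P : MvPolynomial (Fin n) F,
        P ∈ I ↔ (∀ i : Fin n, P.degreeOf i < q) ∧
          ∀ a : Fin n → F,
            eval (fun k : Fin n => eval a (esymm (Fin n) F ((k : ℕ) + 1))) P = 0) ∧
      Module.finrank F I = q ^ n - (n + q - 1).choose n := by
  classical
  have hq2 : 2 ≤ q := hq.two_le
  -- the map sending a tuple to the values of the elementary symmetric functions
  set φ : (Fin n → F) → (Fin n → F) :=
    fun a k => eval a (esymm (Fin n) F ((k : ℕ) + 1)) with hφ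
  set Ψ : ((Fin n → F) → F) →ₗ[F] ((Fin n → F) → F) := LinearMap.funLeft F F φ with hΨdef
  set Φ : MvPolynomial (Fin n) F →ₗ[F] ((Fin n → F) → F) :=
    Ψ.comp (evalₗ F (Fin n)) with hΦdef
  set R' : Submodule F (MvPolynomial (Fin n) F) :=
    restrictDegree (Fin n) F (Fintype.card F - 1) with hR'
  refine ⟨R' ⊓ LinearMap.ker Φ, ?_, ?_⟩
  · intro P
    rw [Submodule.mem_inf]
    have hmem : P ∈ R' ↔ ∀ i : Fin n, P.degreeOf i < q := by
      rw [hR', mem_restrictDegree]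
      constructor
      · intro h i
        rw [degreeOf_lt_iff (by omega)]
        intro s hs
        have := h s hs i
        omega
      · intro h s hs i
        have := (degreeOf_lt_iff (f := P) (n := i) (by omega : 0 < q)).1 (h i) s hs
        omega
    have hΦapp : ∀ (Q : MvPolynomial (Fin n) F) (a : Fin n → F),
        Φ Q a = eval (φ a) Q := fun Q a => rfl
    have hker : P ∈ LinearMap.ker Φ ↔ ∀ a : Fin n → F,
        eval (fun k : Fin n => eval a (esymm (Fin n) F ((k : ℕ) + 1))) P = 0 := by
      rw [LinearMap.mem_ker, funext_iff]
      exact forall_congr' fun a => by rw [hΦapp]; rfl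
    rw [hmem, hker]
  · -- dimension count
    haveI : FiniteDimensional F R' :=
      inferInstanceAs (FiniteDimensional F (MvPolynomial.R (Fin n) F))
    have hfinR : Module.finrank F R' = q ^ n := by
      refine (MvPolynomial.finrank_R (Fin n) F).trans ?_
      rw [Fintype.card_eq_nat_card]
      simp [Nat.card_eq_fintype_card, Fintype.card_fun, hF]
    set f : R' →ₗ[F] ((Fin n → F) → F) := Φ.comp R'.subtype with hfdef
    -- the kernel of f computes the intersection
    have hkf : LinearMap.ker f = Submodule.comap R'.subtype (R' ⊓ LinearMap.ker Φ) := by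
      rw [Submodule.comap_inf, Submodule.comap_subtype_self, top_inf_eq, hfdef,
        LinearMap.ker_comp]
    have e1 : Module.finrank F (R' ⊓ LinearMap.ker Φ : Submodule F (MvPolynomial (Fin n) F)) =
        Module.finrank F (LinearMap.ker f) := by
      rw [hkf]
      exact (Submodule.comapSubtypeEquivOfLe inf_le_left).finrank_eq.symm
    -- the range of f is the range of Ψ
    have hrange : LinearMap.range f = LinearMap.range Ψ := by
      have hf2 : f = Ψ.comp (MvPolynomial.evalᵢ (Fin n) F) := rfl
      rw [hf2]
      exact LinearMap.range_comp_of_range_eq_top _ (MvPolynomial.range_evalᵢ (Fin n) F)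
    -- the range of Ψ has dimension the cardinality of the range of φ
    have hΨsplit : Ψ = (LinearMap.funLeft F F (Set.rangeFactorization φ)).comp
        (LinearMap.funLeft F F ((↑) : Set.range φ → (Fin n → F))) := by
      ext g a
      rfl
    have hsurj : Function.Surjective
        (LinearMap.funLeft F F ((↑) : Set.range φ → (Fin n → F)) :
          ((Fin n → F) → F) →ₗ[F] (Set.range φ → F)) :=
      LinearMap.funLeft_surjective_of_injective F F _ Subtype.val_injective
    have hinj : Function.Injective
        (LinearMap.funLeft F F (Set.rangeFactorization φ) :
          (Set.range φ → F) →ₗ[F] ((Fin n → F) → F)) :=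
      LinearMap.funLeft_injective_of_surjective F F _ Set.rangeFactorization_surjective
    have hrΨ : Module.finrank F (LinearMap.range Ψ) = Fintype.card (Set.range φ) := by
      rw [hΨsplit, LinearMap.range_comp_of_range_eq_top _ (LinearMap.range_eq_top.2 hsurj),
        LinearMap.finrank_range_of_inj hinj, Module.finrank_fintype_fun_eq_card]
    -- the range of φ is in bijection with Sym F n
    set E : Sym F n → (Fin n → F) := fun m k => Multiset.esymm (m : Multiset F) ((k : ℕ) + 1)
      with hE
    have hEinj : Function.Injective E := by
      intro m₁ m₂ hm
      exact Sym.coe_injective (multiset_esymm_inj _ _ m₁.2 m₂.2 (fun k => congrFun hm k))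
    have hrangeφ : Set.range φ = Set.range E := by
      ext c
      constructor
      · rintro ⟨a, rfl⟩
        refine ⟨⟨Multiset.map a Finset.univ.val, by simp⟩, ?_⟩
        funext k
        simp only [hE, hφ]
        rw [eval_esymm_eq_multiset]
        rfl
      · rintro ⟨m, rfl⟩
        obtain ⟨a, ha⟩ := multiset_exists_ofFn (m : Multiset F) m.2
        refine ⟨a, ?_⟩
        funext k
        simp only [hφ, hE]
        rw [eval_esymm_eq_multiset, ha]
    have hcard : Fintype.card (Set.range φ) = (n + q - 1).choose n := by
      have e : (Set.range φ) ≃ Sym F n :=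
        (Equiv.setCongr hrangeφ).trans (Equiv.ofInjective E hEinj).symm
      rw [Fintype.card_congr e, Sym.card_sym_eq_choose, hF]
      congr 1
      omega
    have hrn := LinearMap.finrank_range_add_finrank_ker f
    rw [hrange, hrΨ, hcard, hfinR] at hrn
    omega
end

section
/- Let q be a prime power, F_q a finite field with q elements equipped with a fixed linear order, and n ≥ 1. Let M(q,n) be the matrix whose rows are indexed by weakly monotone increasing tuples ι ∈ F_q^n, whose columns are indexed by exponent vectors α = (α_1,...,α_n) with 0 ≤ α_i < q, and whose (ι, α) entry is e_1(ι)^{α_1} · e_2(ι)^{α_2} ··· e_n(ι)^{α_n}. Then M(q,n) has maximal rank, equal to the number C(n+q-1, n) of its rows. -/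
open MvPolynomial

section Aux

variable {n q : ℕ} {F : Type} [Field F] [Fintype F]

private lemma aux_eval_esymm (a : Fin n → F) (j : ℕ) :
    eval a (esymm (Fin n) F j) = (Finset.univ.val.map a).esymm j := by
  rw [MvPolynomial.esymm, Finset.esymm_map_val, map_sum]
  exact Finset.sum_congr rfl fun t _ => by rw [eval_prod]; simp

private lemma aux_mono_ext [LinearOrder F] {a b : Fin n → F} (ha : Monotone a) (hb : Monotone b)
    (h : (Finset.univ.val.map a : Multiset F) = Finset.univ.val.map b) : a = b := by
  have hperm : (List.ofFn a).Perm (List.ofFn b) := by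
    rw [← Multiset.coe_eq_coe]
    simpa [Fin.univ_val_map] using h
  have hsa : (List.ofFn a).SortedLE := ha.sortedLE_ofFn
  have hsb : (List.ofFn b).SortedLE := hb.sortedLE_ofFn
  exact List.ofFn_injective (List.Perm.eq_of_sortedLE hsa hsb hperm)

private lemma aux_esymm_inj [LinearOrder F] {a b : Fin n → F} (ha : Monotone a) (hb : Monotone b)
    (h : ∀ k : Fin n, eval a (esymm (Fin n) F ((k : ℕ) + 1)) =
      eval b (esymm (Fin n) F ((k : ℕ) + 1))) : a = b := by
  apply aux_mono_ext ha hb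
  have hca : Multiset.card (Finset.univ.val.map a) = n := by simp
  have hcb : Multiset.card (Finset.univ.val.map b) = n := by simp
  have hpoly : ((Finset.univ.val.map a).map fun t => Polynomial.X - Polynomial.C t).prod =
      ((Finset.univ.val.map b).map fun t => Polynomial.X - Polynomial.C t).prod := by
    rw [Multiset.prod_X_sub_X_eq_sum_esymm, Multiset.prod_X_sub_X_eq_sum_esymm, hca, hcb]
    refine Finset.sum_congr rfl fun j hj => ?_
    rcases Nat.eq_zero_or_pos j with rfl | hjpos
    · simp [Multiset.esymm, Multiset.powersetCard_zero_left]
    · obtain ⟨k, rfl⟩ : ∃ k, j = k + 1 := ⟨j - 1, by omega⟩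
      have hk : k < n := by have := Finset.mem_range.mp hj; omega
      have hh := h ⟨k, hk⟩
      rw [aux_eval_esymm, aux_eval_esymm] at hh
      rw [show ((⟨k, hk⟩ : Fin n) : ℕ) + 1 = k + 1 from rfl] at hh
      rw [hh]
  have := congrArg Polynomial.roots hpoly
  rwa [Polynomial.roots_multiset_prod_X_sub_C, Polynomial.roots_multiset_prod_X_sub_C] at this

private lemma aux_linIndep (hF : Fintype.card F = q) :
    LinearIndependent F
      (fun (x : Fin n → F) => fun (α : Fin n → Fin q) => ∏ k, x k ^ (α k : ℕ)) := by
  classical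
  rw [Fintype.linearIndependent_iff]
  intro c hc x₀
  have hα : ∀ α : Fin n → Fin q, ∑ x : Fin n → F, c x * ∏ k, x k ^ (α k : ℕ) = 0 := by
    intro α
    have := congrFun hc α
    simpa [Finset.sum_apply] using this
  have key : ∀ p ∈ restrictDegree (Fin n) F (Fintype.card F - 1),
      ∑ x : Fin n → F, c x * eval x p = 0 := by
    intro p hp
    rw [mem_restrictDegree] at hp
    calc ∑ x : Fin n → F, c x * eval x p
        = ∑ x : Fin n → F, ∑ d ∈ p.support, c x * (coeff d p * ∏ k, x k ^ d k) := by
          simp_rw [eval_eq', Finset.mul_sum]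
      _ = ∑ d ∈ p.support, coeff d p * ∑ x : Fin n → F, c x * ∏ k, x k ^ d k := by
          rw [Finset.sum_comm]
          refine Finset.sum_congr rfl fun d _ => ?_
          rw [Finset.mul_sum]
          exact Finset.sum_congr rfl fun x _ => by ring
      _ = 0 := by
          refine Finset.sum_eq_zero fun d hd => ?_
          have hdq : ∀ k, d k < q := by
            intro k
            have h1 := hp d hd k
            have h2 : 0 < Fintype.card F := Fintype.card_pos
            omega
          have h : ∑ x : Fin n → F, c x * ∏ k, x k ^ d k = 0 := by
            simpa using hα (fun k => ⟨d k, hdq k⟩)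
          rw [h, mul_zero]
  have hsurj := MvPolynomial.range_evalᵢ (Fin n) F
  have hmem : (Pi.single x₀ 1 : (Fin n → F) → F) ∈ LinearMap.range (evalᵢ (Fin n) F) := by
    rw [hsurj]; trivial
  obtain ⟨p', hp'⟩ := hmem
  have h0 : ∑ x : Fin n → F, c x * (Pi.single x₀ 1 : (Fin n → F) → F) x = 0 := by
    rw [← hp']
    exact key p'.1 p'.2
  simpa [Pi.single_apply, mul_comm] using h0

private lemma aux_card [LinearOrder F] [Fintype {a : Fin n → F // Monotone a}] :
    Fintype.card {a : Fin n → F // Monotone a} = (Fintype.card F + n - 1).choose n := by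
  classical
  rw [← Sym.card_sym_eq_choose]
  refine Fintype.card_of_bijective (f := fun a : {a : Fin n → F // Monotone a} =>
    (⟨(List.ofFn a.1 : Multiset F), by simp⟩ : Sym F n)) ⟨?_, ?_⟩
  · rintro ⟨a, ha⟩ ⟨b, hb⟩ hab
    have : (List.ofFn a : Multiset F) = (List.ofFn b : Multiset F) := congrArg Subtype.val hab
    refine Subtype.ext (aux_mono_ext ha hb ?_)
    simpa [Fin.univ_val_map] using this
  · rintro ⟨s, hs⟩
    set l := Multiset.sort s (· ≤ ·) with hl
    have hlen : l.length = n := by rw [hl, Multiset.length_sort, hs]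
    refine ⟨⟨fun i => l.get (Fin.cast hlen.symm i), ?_⟩, ?_⟩
    · intro i j hij
      exact (Multiset.pairwise_sort s (· ≤ ·)).rel_get_of_le hij
    · refine Subtype.ext ?_
      show ((List.ofFn (fun i : Fin n => l.get (Fin.cast hlen.symm i)) : List F) : Multiset F) = s
      have : List.ofFn (fun i : Fin n => l.get (Fin.cast hlen.symm i)) = l := by
        refine List.ext_get (by simp only [List.length_ofFn, hlen]) fun i h1 h2 => ?_
        simp only [List.get_ofFn]
        rfl
      rw [this, hl, Multiset.sort_eq]

end Aux

/-- The matrix whose rows are indexed by weakly monotone increasing tuples `ι ∈ F_q^n`, whose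
columns are indexed by exponent vectors `α` with entries `< q`, and whose `(ι, α)` entry is
`∏ k, e_k(ι) ^ α_k`, has maximal rank `(n + q - 1).choose n`, the number of its rows. -/
theorem stmt4 (q n : ℕ) (hq : IsPrimePow q) (hn : 1 ≤ n)
    (F : Type) [Field F] [Fintype F] [LinearOrder F] (hF : Fintype.card F = q)
    (M : Matrix {a : Fin n → F // Monotone a} (Fin n → Fin q) F)
    (hM : ∀ (ι : {a : Fin n → F // Monotone a}) (α : Fin n → Fin q),
      M ι α = ∏ k : Fin n, (eval ι.1 (esymm (Fin n) F ((k : ℕ) + 1))) ^ (α k : ℕ)) :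
    M.rank = (n + q - 1).choose n ∧
      M.rank = Nat.card {a : Fin n → F // Monotone a} := by
  classical
  haveI : Fintype {a : Fin n → F // Monotone a} := Fintype.ofFinite _
  set P : {a : Fin n → F // Monotone a} → (Fin n → F) :=
    fun ι k => eval ι.1 (esymm (Fin n) F ((k : ℕ) + 1)) with hP
  have hPinj : Function.Injective P := by
    intro a b hab
    exact Subtype.ext (aux_esymm_inj a.2 b.2 fun k => congrFun hab k)
  have hMli : LinearIndependent F M := by
    have h1 := (aux_linIndep (n := n) hF).comp P hPinj
    have hMeq : M = (fun x : Fin n → F => fun α : Fin n → Fin q => ∏ k, x k ^ (α k : ℕ)) ∘ P := by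
      funext ι α
      rw [hM]
      rfl
    rwa [hMeq]
  have hrank := hMli.rank_matrix
  have hcard : Fintype.card {a : Fin n → F // Monotone a} = (n + q - 1).choose n := by
    rw [aux_card, hF, Nat.add_comm n q]
  exact ⟨by rw [hrank, hcard], by rw [hrank, Nat.card_eq_fintype_card]⟩
end

section
/- Let q be a prime power, F_q a finite field with q elements, and n ≥ 1. The symmetric group S_n acts on the quotient F_q-algebra F_q[X_1,...,X_n]/(X_1^q − X_1, ..., X_n^q − X_n) by permuting the variables, and the subspace of elements fixed by every permutation is an F_q-vector space of dimension C(n+q-1, n). -/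
open MvPolynomial

section TuplePerm

lemma exists_comp_perm_eq {α β : Type*} [Fintype α] [DecidableEq β]
    {a b : α → β} (h : Multiset.map a Finset.univ.val = Multiset.map b Finset.univ.val) :
    ∃ σ : Equiv.Perm α, a ∘ σ = b := by
  classical
  have key : ∀ (f : α → β) (c : β),
      Fintype.card {i // f i = c} = Multiset.count c (Multiset.map f Finset.univ.val) := by
    intro f c
    rw [Multiset.count_map, Fintype.card_subtype, Finset.card_def, Finset.filter_val]
    exact congrArg Multiset.card (Multiset.filter_congr fun i _ => eq_comm)
  have hcard : ∀ c : β, Fintype.card {i // b i = c} = Fintype.card {i // a i = c} := by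
    intro c
    rw [key a c, key b c, h]
  exact ⟨Equiv.ofFiberEquiv (f := b) (g := a) fun c => Fintype.equivOfCardEq (hcard c),
    funext fun i => Equiv.ofFiberEquiv_map _ i⟩

end TuplePerm

noncomputable section Stmt9Aux

variable (F : Type) [Field F] [Fintype F] (n : ℕ)

/-- The ideal generated by `X i ^ q - X i`. -/
abbrev qIdeal : Ideal (MvPolynomial (Fin n) F) :=
  Ideal.span (Set.range fun i : Fin n =>
    (X i ^ Fintype.card F - X i : MvPolynomial (Fin n) F))

/-- Simultaneous evaluation at all points, as an algebra hom. -/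
def evalAll : MvPolynomial (Fin n) F →ₐ[F] ((Fin n → F) → F) :=
  Pi.algHom F _ fun a => aeval a

lemma evalAll_apply (P : MvPolynomial (Fin n) F) (a : Fin n → F) :
    evalAll F n P a = eval a P := by
  show aeval a P = eval a P
  rw [← coe_aeval_eq_eval]; rfl

lemma evalAll_vanish : ∀ P ∈ qIdeal F n, evalAll F n P = 0 := by
  intro P hP
  have hle : qIdeal F n ≤ RingHom.ker (evalAll F n).toRingHom := by
    rw [Ideal.span_le]
    rintro _ ⟨i, rfl⟩
    rw [SetLike.mem_coe, RingHom.mem_ker]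
    funext a
    simp [evalAll_apply, FiniteField.pow_card]
  exact hle hP

/-- Evaluation descended to the quotient. -/
def evalQ : (MvPolynomial (Fin n) F ⧸ qIdeal F n) →ₐ[F] ((Fin n → F) → F) :=
  Ideal.Quotient.liftₐ (qIdeal F n) (evalAll F n) (evalAll_vanish F n)

lemma evalQ_mk (P : MvPolynomial (Fin n) F) :
    evalQ F n (Ideal.Quotient.mk _ P) = evalAll F n P := by
  rw [evalQ, Ideal.Quotient.liftₐ_apply]
  exact Ideal.Quotient.lift_mk _ _ _

lemma monomial_mem_sup (N : ℕ) : ∀ d : Fin n →₀ ℕ, (d.sum fun _ e => e) ≤ N → ∀ c : F,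
    (monomial d c : MvPolynomial (Fin n) F) ∈
      restrictDegree (Fin n) F (Fintype.card F - 1) ⊔ (qIdeal F n).restrictScalars F := by
  induction N with
  | zero =>
    intro d hd c
    apply Submodule.mem_sup_left
    rw [mem_restrictDegree]
    intro s hs i
    have hsd : s = d := Finset.mem_singleton.mp (MvPolynomial.support_monomial_subset hs)
    subst hsd
    have : s i ≤ s.sum fun _ e => e := by
      by_cases hi : i ∈ s.support
      · exact Finset.single_le_sum (f := fun j => s j) (fun _ _ => Nat.zero_le _) hi
      · simp [Finsupp.notMem_support_iff.mp hi]
    omega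
  | succ N ih =>
    intro d hd c
    by_cases hsmall : ∀ i, d i ≤ Fintype.card F - 1
    · apply Submodule.mem_sup_left
      rw [mem_restrictDegree]
      intro s hs i
      have hsd : s = d := Finset.mem_singleton.mp (MvPolynomial.support_monomial_subset hs)
      subst hsd
      exact hsmall i
    · push_neg at hsmall
      obtain ⟨i, hi⟩ := hsmall
      have hq2 : 1 < Fintype.card F := Fintype.one_lt_card
      have hdi : Fintype.card F ≤ d i := by omega
      set d'' := d - Finsupp.single i (Fintype.card F) with hd''
      have hle : Finsupp.single i (Fintype.card F) ≤ d := Finsupp.single_le_iff.mpr hdi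
      have hd1 : d'' + Finsupp.single i (Fintype.card F) = d := tsub_add_cancel_of_le hle
      set d' := d'' + Finsupp.single i 1 with hd'
      have hsum : (d''.sum fun _ e => e) + Fintype.card F = d.sum fun _ e => e := by
        rw [← hd1, Finsupp.sum_add_index' (fun _ => rfl) (fun _ _ _ => rfl),
          Finsupp.sum_single_index rfl]
      have hsum' : (d'.sum fun _ e => e) = (d''.sum fun _ e => e) + 1 := by
        rw [hd', Finsupp.sum_add_index' (fun _ => rfl) (fun _ _ _ => rfl),
          Finsupp.sum_single_index rfl]
      have h1 : (monomial d'' c : MvPolynomial (Fin n) F) * X i ^ Fintype.card F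
          = monomial d c := by
        rw [X_pow_eq_monomial, monomial_mul, mul_one, hd1]
      have h2 : (monomial d'' c : MvPolynomial (Fin n) F) * X i = monomial d' c := by
        rw [← pow_one (X i), X_pow_eq_monomial, monomial_mul, mul_one, hd']
      have key : (monomial d c : MvPolynomial (Fin n) F)
          = monomial d' c + monomial d'' c * (X i ^ Fintype.card F - X i) := by
        rw [mul_sub, h1, h2]; ring
      rw [key]
      refine Submodule.add_mem _ (ih d' (by omega) c) (Submodule.mem_sup_right ?_)
      rw [Submodule.restrictScalars_mem]
      exact Ideal.mul_mem_left _ _ (Ideal.subset_span ⟨i, rfl⟩)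

lemma exists_decomp (P : MvPolynomial (Fin n) F) :
    ∃ Q ∈ restrictDegree (Fin n) F (Fintype.card F - 1), P - Q ∈ qIdeal F n := by
  have hP : P ∈ restrictDegree (Fin n) F (Fintype.card F - 1)
      ⊔ (qIdeal F n).restrictScalars F := by
    rw [← support_sum_monomial_coeff P]
    exact Submodule.sum_mem _ fun d _ => monomial_mem_sup F n _ d le_rfl _
  obtain ⟨Q, hQ, R, hR, hQR⟩ := Submodule.mem_sup.mp hP
  exact ⟨Q, hQ, by rw [← hQR]; simpa using hR⟩

lemma evalQ_bijective : Function.Bijective (evalQ F n) := by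
  constructor
  · rw [injective_iff_map_eq_zero]
    intro x hx
    obtain ⟨P, rfl⟩ := Ideal.Quotient.mk_surjective x
    rw [evalQ_mk] at hx
    obtain ⟨Q, hQ, hPQ⟩ := exists_decomp F n P
    have hvan : evalAll F n (P - Q) = 0 := evalAll_vanish F n _ hPQ
    have hQ0 : Q = 0 := by
      refine eq_zero_of_eval_eq_zero (σ := Fin n) (K := F) Q (fun v => ?_) hQ
      have h1 : eval v P = 0 := by rw [← evalAll_apply, hx]; rfl
      have h2 : eval v (P - Q) = 0 := by rw [← evalAll_apply, hvan]; rfl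
      rw [map_sub, h1, zero_sub, neg_eq_zero] at h2
      exact h2
    rw [Ideal.Quotient.eq_zero_iff_mem]
    simpa [hQ0] using hPQ
  · intro f
    have htop := map_restrict_dom_evalₗ F (Fin n)
    have hf : f ∈ (restrictDegree (Fin n) F (Fintype.card F - 1)).map (evalₗ F (Fin n)) := by
      rw [htop]; trivial
    obtain ⟨P, -, hP⟩ := Submodule.mem_map.mp hf
    refine ⟨Ideal.Quotient.mk _ P, ?_⟩
    rw [evalQ_mk]
    funext a
    rw [evalAll_apply, ← hP]
    rfl

/-- Linear equivalence between the quotient and the function space. -/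
def evalEquiv : (MvPolynomial (Fin n) F ⧸ qIdeal F n) ≃ₗ[F] ((Fin n → F) → F) :=
  (AlgEquiv.ofBijective (evalQ F n) (evalQ_bijective F n)).toLinearEquiv

lemma evalEquiv_mk (P : MvPolynomial (Fin n) F) (a : Fin n → F) :
    evalEquiv F n (Ideal.Quotient.mk _ P) a = eval a P := by
  show evalQ F n (Ideal.Quotient.mk _ P) a = eval a P
  rw [evalQ_mk, evalAll_apply]

/-- The multiset of values of a tuple. -/
def tupleSym : (Fin n → F) → Sym F n := fun a =>
  ⟨Multiset.map a Finset.univ.val, by simp⟩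

lemma tupleSym_comp (a : Fin n → F) (σ : Equiv.Perm (Fin n)) :
    tupleSym F n (a ∘ σ) = tupleSym F n a := by
  apply Subtype.ext
  show Multiset.map (a ∘ σ) Finset.univ.val = Multiset.map a Finset.univ.val
  rw [← Multiset.map_map]
  congr 1
  exact congrArg Finset.val (Finset.map_univ_equiv σ)

lemma tupleSym_eq_iff {a b : Fin n → F} :
    tupleSym F n a = tupleSym F n b ↔ ∃ σ : Equiv.Perm (Fin n), a ∘ σ = b := by
  classical
  constructor
  · intro h
    exact exists_comp_perm_eq (Subtype.ext_iff.mp h)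
  · rintro ⟨σ, rfl⟩
    exact (tupleSym_comp F n a σ).symm

lemma tupleSym_surjective : Function.Surjective (tupleSym F n) := by
  rintro ⟨m, hm⟩
  have hl : m.toList.length = n := by rw [Multiset.length_toList]; exact hm
  refine ⟨fun i => m.toList.get (Fin.cast hl.symm i), Subtype.ext ?_⟩
  have h2 : Multiset.map (fun i => m.toList.get (Fin.cast hl.symm i)) Finset.univ.val = m := by
    rw [Fin.univ_val_map]
    have h3 : List.ofFn (fun i => m.toList.get (Fin.cast hl.symm i)) = m.toList := by
      subst hl; exact List.ofFn_getElem
    rw [h3, Multiset.coe_toList]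
  exact h2

/-- Precomposition with `tupleSym` as a linear map. -/
def symToFun : (Sym F n → F) →ₗ[F] ((Fin n → F) → F) :=
  LinearMap.funLeft F F (tupleSym F n)

lemma mem_range_symToFun (f : (Fin n → F) → F) :
    f ∈ LinearMap.range (symToFun F n) ↔
      ∀ (σ : Equiv.Perm (Fin n)) (a : Fin n → F), f (a ∘ σ) = f a := by
  constructor
  · rintro ⟨g, rfl⟩ σ a
    show g (tupleSym F n (a ∘ σ)) = g (tupleSym F n a)
    rw [tupleSym_comp]
  · intro h
    refine ⟨fun s => f (Function.surjInv (tupleSym_surjective F n) s), funext fun a => ?_⟩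
    show f (Function.surjInv (tupleSym_surjective F n) (tupleSym F n a)) = f a
    set x := Function.surjInv (tupleSym_surjective F n) (tupleSym F n a) with hx
    have hμ : tupleSym F n x = tupleSym F n a := Function.surjInv_eq _ _
    obtain ⟨σ, hσ⟩ := (tupleSym_eq_iff F n).mp hμ
    have h3 : f (x ∘ σ) = f x := h σ x
    rw [hσ] at h3
    exact h3.symm

end Stmt9Aux

/-- The symmetric group acts on `F_q[X_1,...,X_n] / (X_i ^ q - X_i)` by permuting variables,
and the subspace of elements fixed by every permutation has dimension `(n + q - 1).choose n`
over `F_q`. An element `x` of the quotient is fixed exactly when for every representative `P`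
of `x` and every permutation `σ`, the class of `rename σ P` is again `x`. -/
theorem stmt9 (q n : ℕ) (hq : IsPrimePow q) (hn : 1 ≤ n)
    (F : Type) [Field F] [Fintype F] (hF : Fintype.card F = q) :
    ∃ S : Submodule F
      (MvPolynomial (Fin n) F ⧸
        Ideal.span (Set.range fun i : Fin n =>
          (X i ^ q - X i : MvPolynomial (Fin n) F))),
      (∀ x, x ∈ S ↔ ∀ (σ : Equiv.Perm (Fin n)) (P : MvPolynomial (Fin n) F),
        Ideal.Quotient.mk _ P = x → Ideal.Quotient.mk _ (rename σ P) = x) ∧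
      Module.finrank F S = (n + q - 1).choose n := by
  classical
  subst hF
  set E := evalEquiv F n
  refine ⟨Submodule.comap (E : _ →ₗ[F] _) (LinearMap.range (symToFun F n)), fun x => ?_, ?_⟩
  · rw [Submodule.mem_comap]
    change E x ∈ _ ↔ _
    rw [mem_range_symToFun]
    constructor
    · intro h σ P hP
      obtain ⟨R, hR⟩ := Ideal.Quotient.mk_surjective x
      apply E.injective
      funext a
      have : E (Ideal.Quotient.mk _ (rename σ P)) a = eval a (rename σ P) := evalEquiv_mk F n _ a
      rw [this, eval_rename]
      have h2 : E x (a ∘ σ) = E x a := h σ a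
      rw [← hP] at h2 ⊢
      rw [evalEquiv_mk] at h2
      exact h2
    · intro h σ a
      obtain ⟨P, hP⟩ := Ideal.Quotient.mk_surjective x
      have h2 := h σ P hP
      rw [← hP, evalEquiv_mk, ← eval_rename, ← evalEquiv_mk F n (rename σ P) a, h2, hP]
  · have hinj : Function.Injective (symToFun F n) :=
      LinearMap.funLeft_injective_of_surjective F F _ (tupleSym_surjective F n)
    rw [Submodule.comap_equiv_eq_map_symm, LinearEquiv.finrank_map_eq,
      LinearMap.finrank_range_of_inj hinj, Module.finrank_fintype_fun_eq_card,
      Sym.card_sym_eq_choose]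
    congr 1
    omega
end

section
/- Let q = p^r be a prime power with p prime, F_q a finite field with q elements, and n ≥ 1. Then the F_q-vector space I(q,n) admits an F_q-basis consisting of polynomials all of whose coefficients lie in the prime subfield F_p of F_q. Equivalently, I(q,n) is spanned over F_q by its elements whose coefficients all lie in F_p. -/
open MvPolynomial

private lemma evalmap_aux {n : ℕ} {F : Type} [Field F] (σ : F →+* F) (a' : Fin n → F)
    (R : MvPolynomial (Fin n) F) :
    eval (σ ∘ a') (map σ R) = σ (eval a' R) := by
  rw [eval_map, ← eval₂_id (g := a') R, eval₂_comp_left σ (RingHom.id F) a' R,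
    RingHom.comp_id]

private lemma fixedPt_aux {p : ℕ} (hp : p.Prime) {F : Type} [Field F] [Fintype F] [CharP F p]
    {z : F} (hz : z ^ p = z) : z ∈ Set.range (ZMod.castHom (dvd_refl p) F) := by
  classical
  haveI := Fact.mk hp
  set φ := ZMod.castHom (dvd_refl p) F with hφ
  set g : Polynomial F := Polynomial.X ^ p - Polynomial.X with hg
  have hg0 : g ≠ 0 := FiniteField.X_pow_card_sub_X_ne_zero F hp.one_lt
  have hdeg : g.natDegree = p := FiniteField.X_pow_card_sub_X_natDegree_eq F hp.one_lt
  have hroots : (Finset.univ.image φ) ⊆ g.roots.toFinset := by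
    intro y hy
    obtain ⟨w, -, rfl⟩ := Finset.mem_image.mp hy
    rw [Multiset.mem_toFinset, Polynomial.mem_roots hg0]
    have : (φ w) ^ p = φ w := by rw [← map_pow, ZMod.pow_card]
    simp [Polynomial.IsRoot, hg, this]
  have hcard : g.roots.toFinset.card ≤ p :=
    le_trans (Multiset.toFinset_card_le _) (le_trans (Polynomial.card_roots' g) hdeg.le)
  have hcardim : (Finset.univ.image φ).card = p := by
    rw [Finset.card_image_of_injective _ φ.injective, Finset.card_univ, ZMod.card]
  have heq : Finset.univ.image φ = g.roots.toFinset :=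
    Finset.eq_of_subset_of_card_le hroots (by rw [hcardim]; exact hcard)
  have hzroot : z ∈ g.roots.toFinset := by
    rw [Multiset.mem_toFinset, Polynomial.mem_roots hg0]
    simp [Polynomial.IsRoot, hg, hz]
  rw [← heq] at hzroot
  obtain ⟨w, -, rfl⟩ := Finset.mem_image.mp hzroot
  exact ⟨w, rfl⟩

private lemma twist_eval_aux {p n : ℕ} [Fact p.Prime] {F : Type} [Field F] [Fintype F] [CharP F p]
    (P : MvPolynomial (Fin n) F)
    (hPeval : ∀ a : Fin n → F,
      eval (fun k : Fin n => eval a (esymm (Fin n) F ((k : ℕ) + 1))) P = 0)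
    (s : ℕ) (a : Fin n → F) :
    eval (fun k : Fin n => eval a (esymm (Fin n) F ((k : ℕ) + 1)))
      (map (iterateFrobenius F p s) P) = 0 := by
  set σ := iterateFrobenius F p s with hσ
  set a' : Fin n → F := fun i => (iterateFrobeniusEquiv F p s).symm (a i) with ha'
  have ha : σ ∘ a' = a := by
    funext i
    exact (iterateFrobeniusEquiv F p s).apply_symm_apply (a i)
  have hE : (fun k : Fin n => eval a (esymm (Fin n) F ((k : ℕ) + 1)))
      = σ ∘ (fun k : Fin n => eval a' (esymm (Fin n) F ((k : ℕ) + 1))) := by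
    funext k
    show eval a (esymm (Fin n) F ((k : ℕ) + 1)) = σ (eval a' (esymm (Fin n) F ((k : ℕ) + 1)))
    rw [← evalmap_aux σ a' (esymm (Fin n) F ((k : ℕ) + 1)), map_esymm, ha]
  rw [hE, evalmap_aux σ _ P, hPeval a', map_zero]

private lemma degreeOf_lt_of_support_subset_aux {n q : ℕ} {F : Type} [CommSemiring F]
    {P Q : MvPolynomial (Fin n) F} (h : Q.support ⊆ P.support)
    (hP : ∀ i : Fin n, P.degreeOf i < q) : ∀ i : Fin n, Q.degreeOf i < q := by
  intro i
  refine lt_of_le_of_lt ?_ (hP i)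
  rw [degreeOf_eq_sup, degreeOf_eq_sup]
  exact Finset.sup_mono h

/-- The space `I(q,n)` of algebraic relations among the elementary symmetric polynomial
functions over `F_q` (`q = p ^ r`) is spanned over `F_q` by its elements all of whose
coefficients lie in the prime subfield `F_p` (the image of `ZMod p` in `F_q`). Hence it
admits a basis with coefficients in `F_p`. -/
theorem stmt10 (p r n : ℕ) (hp : p.Prime) (hr : 1 ≤ r) (hn : 1 ≤ n)
    (F : Type) [Field F] [Fintype F] [CharP F p] (hF : Fintype.card F = p ^ r)
    (P : MvPolynomial (Fin n) F)
    (hP : (∀ i : Fin n, P.degreeOf i < p ^ r) ∧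
      ∀ a : Fin n → F,
        eval (fun k : Fin n => eval a (esymm (Fin n) F ((k : ℕ) + 1))) P = 0) :
    P ∈ Submodule.span F {Q : MvPolynomial (Fin n) F |
      ((∀ i : Fin n, Q.degreeOf i < p ^ r) ∧
        ∀ a : Fin n → F,
          eval (fun k : Fin n => eval a (esymm (Fin n) F ((k : ℕ) + 1))) Q = 0) ∧
      ∀ m : Fin n →₀ ℕ, Q.coeff m ∈ Set.range (ZMod.castHom (dvd_refl p) F)} := by
  classical
  haveI := Fact.mk hp
  obtain ⟨hPdeg, hPeval⟩ := hP
  by_contra hPnot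
  obtain ⟨f, hf0, hfbot⟩ := Submodule.exists_dual_map_eq_bot_of_notMem hPnot (Module.Projective.of_free (R := F))
  -- the "trace-averaged" polynomials
  -- Qf x = ∑_{s<r} C (x^{p^s}) * map (Frob^s) P
  have hQmem : ∀ x : F,
      (∑ s ∈ Finset.range r, C (x ^ p ^ s) * map (iterateFrobenius F p s) P) ∈
      {Q : MvPolynomial (Fin n) F |
      ((∀ i : Fin n, Q.degreeOf i < p ^ r) ∧
        ∀ a : Fin n → F,
          eval (fun k : Fin n => eval a (esymm (Fin n) F ((k : ℕ) + 1))) Q = 0) ∧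
      ∀ m : Fin n →₀ ℕ, Q.coeff m ∈ Set.range (ZMod.castHom (dvd_refl p) F)} := by
    intro x
    have hcoeffQ : ∀ m : Fin n →₀ ℕ,
        (∑ s ∈ Finset.range r, C (x ^ p ^ s) * map (iterateFrobenius F p s) P).coeff m
        = ∑ s ∈ Finset.range r, (x * P.coeff m) ^ p ^ s := by
      intro m
      rw [coeff_sum]
      refine Finset.sum_congr rfl fun s _ => ?_
      rw [coeff_C_mul, coeff_map, iterateFrobenius_def, mul_pow]
    have hsupp : (∑ s ∈ Finset.range r, C (x ^ p ^ s) * map (iterateFrobenius F p s) P).support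
        ⊆ P.support := by
      intro m hm
      rw [mem_support_iff] at hm ⊢
      contrapose! hm
      rw [hcoeffQ m]
      refine Finset.sum_eq_zero fun s _ => ?_
      rw [hm, mul_zero, zero_pow (pow_ne_zero s hp.ne_zero)]
    refine ⟨⟨degreeOf_lt_of_support_subset_aux hsupp hPdeg, ?_⟩, ?_⟩
    · intro a
      rw [map_sum]
      refine Finset.sum_eq_zero fun s _ => ?_
      rw [map_mul, twist_eval_aux P hPeval s a, mul_zero]
    · intro m
      rw [hcoeffQ m]
      set y := x * P.coeff m with hy
      refine fixedPt_aux hp ?_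
      have h1 : (∑ s ∈ Finset.range r, y ^ p ^ s) ^ p
          = ∑ s ∈ Finset.range r, y ^ p ^ (s + 1) := by
        rw [sum_pow_char]
        exact Finset.sum_congr rfl fun s _ => by rw [← pow_mul, pow_succ]
      rw [h1]
      have hyr : y ^ p ^ r = y := by rw [← hF]; exact FiniteField.pow_card y
      have hy0 : y ^ p ^ 0 = y := by simp
      have e1 := Finset.sum_range_succ (fun s => y ^ p ^ s) r
      have e2 := Finset.sum_range_succ' (fun s => y ^ p ^ s) r
      have e3 : (∑ s ∈ Finset.range r, y ^ p ^ s) + y ^ p ^ r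
          = (∑ s ∈ Finset.range r, y ^ p ^ (s + 1)) + y ^ p ^ 0 := by
        rw [← e1, ← e2]
      rw [hyr, hy0] at e3
      exact (add_right_cancel e3).symm
  have hfQ : ∀ x : F,
      f (∑ s ∈ Finset.range r, C (x ^ p ^ s) * map (iterateFrobenius F p s) P) = 0 := by
    intro x
    have hmem : f (∑ s ∈ Finset.range r, C (x ^ p ^ s) * map (iterateFrobenius F p s) P)
        ∈ Submodule.map f (Submodule.span F _) :=
      Submodule.mem_map_of_mem (Submodule.subset_span (hQmem x))
    rwa [hfbot, Submodule.mem_bot] at hmem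
  -- the single-variable polynomial
  set g : Polynomial F := ∑ s ∈ Finset.range r,
    Polynomial.C (f (map (iterateFrobenius F p s) P)) * Polynomial.X ^ p ^ s with hg
  have hgeval : ∀ x : F, g.eval x = 0 := by
    intro x
    rw [hg, Polynomial.eval_finset_sum, ← hfQ x, map_sum]
    refine Finset.sum_congr rfl fun s _ => ?_
    rw [← smul_eq_C_mul, map_smul, smul_eq_mul, Polynomial.eval_mul, Polynomial.eval_C,
      Polynomial.eval_pow, Polynomial.eval_X, mul_comm]
  have hgdeg : g.natDegree < Fintype.card F := by
    rw [hF]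
    refine lt_of_le_of_lt
      (Polynomial.natDegree_sum_le_of_forall_le _ _ fun s hs => ?_)
      (show p ^ (r - 1) < p ^ r from Nat.pow_lt_pow_right hp.one_lt (by omega))
    refine le_trans (Polynomial.natDegree_C_mul_le _ _) ?_
    rw [Polynomial.natDegree_X_pow]
    exact Nat.pow_le_pow_right hp.pos (by
      have := Finset.mem_range.mp hs; omega)
  have hgz : g = 0 :=
    Polynomial.eq_zero_of_natDegree_lt_card_of_eval_eq_zero g Function.injective_id hgeval hgdeg
  have hcoeff : g.coeff 1 = f P := by
    rw [hg, Polynomial.finset_sum_coeff]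
    rw [Finset.sum_eq_single 0]
    · rw [Polynomial.coeff_C_mul, Polynomial.coeff_X_pow, if_pos (by simp), mul_one,
        iterateFrobenius_zero, map_id]
    · intro s hs hs0
      rw [Polynomial.coeff_C_mul, Polynomial.coeff_X_pow, if_neg, mul_zero]
      intro h
      have h2 : 2 ≤ p ^ s := by
        calc 2 ≤ p := hp.two_le
        _ = p ^ 1 := (pow_one p).symm
        _ ≤ p ^ s := Nat.pow_le_pow_right hp.pos (by omega)
      omega
    · intro h
      exact absurd (Finset.mem_range.mpr (by omega)) h
  apply hf0
  rw [← hcoeff, hgz, Polynomial.coeff_zero]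
end

section
/- Let q be a prime power, F_q a finite field with q elements, and n ≥ 1. Let H ∈ F_q[X_1,...,X_n] be a symmetric polynomial in which every variable occurs with degree strictly less than q. Then there exists a polynomial F ∈ F_q[E_1,...,E_n], in which every variable occurs with degree strictly less than q, such that H = F(e_1(X_1,...,X_n), ..., e_n(X_1,...,X_n)). -/
open MvPolynomial

open AddMonoidAlgebra Finset Fin in
private lemma lex_le_first {n : ℕ} (hn : 0 < n) {a b : Lex (Fin n →₀ ℕ)} (h : a ≤ b) :
    ofLex a ⟨0, hn⟩ ≤ ofLex b ⟨0, hn⟩ := by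
  rcases h.eq_or_lt.imp id Finsupp.Lex.lt_iff.mp with rfl | ⟨i, hj, hi⟩
  · exact le_rfl
  · rcases eq_or_ne i ⟨0, hn⟩ with rfl | hne
    · exact hi.le
    · exact (hj _ (lt_of_le_of_ne (by simp [Fin.le_def]) (Ne.symm hne))).le

open AddMonoidAlgebra Finset Fin in
private lemma aux13 {R : Type} [CommRing R] {n d : ℕ} (hn : 0 < n) (t : Lex (Fin n →₀ ℕ)) :
    ∀ p : MvPolynomial (Fin n) R, p.supDegree toLex = t → p.IsSymmetric →
      ofLex t ⟨0, hn⟩ ≤ d →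
      ∃ P : MvPolynomial (Fin n) R, (∀ k, P.degreeOf k ≤ d) ∧
        aeval (fun i : Fin n => esymm (Fin n) R ((i : ℕ) + 1)) P = p := by
  induction t using WellFoundedLT.induction with
  | _ t ih =>
  intro p hpt hp hd
  obtain rfl | h0 := eq_or_ne p 0
  · exact ⟨0, fun k => by simp, by simp⟩
  subst hpt
  have hanti := hp.antitone_supDegree
  set s : Fin n →₀ ℕ := ofLex (p.supDegree toLex) with hs
  set t' : Fin n →₀ ℕ := Finsupp.equivFunOnFinite.symm (invAccumulate n n ↑s) with ht'
  have htk : ∀ k : Fin n, t' k ≤ d := by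
    intro k
    have h1 : t' k ≤ s k := by
      show invAccumulate n n (↑s) k ≤ s k
      rw [invAccumulate, dif_pos k.2]
      exact Nat.sub_le _ _
    exact h1.trans ((hanti (show (⟨0, hn⟩ : Fin n) ≤ k by simp [Fin.le_def])).trans hd)
  have hdsup : (esymmAlgHomMonomial _ t' <| p.leadingCoeff toLex).supDegree toLex
      = p.supDegree toLex := by
    rw [← ofLex_inj, DFunLike.ext'_iff, supDegree_esymmAlgHomMonomial _ _ le_rfl]
    · exact accumulate_invAccumulate le_rfl hanti
    · rwa [Ne, leadingCoeff_eq_zero toLex.injective]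
  have hmono : aeval (fun i : Fin n => esymm (Fin n) R ((i : ℕ) + 1))
        (monomial t' (p.leadingCoeff toLex))
      = esymmAlgHomMonomial (Fin n) t' (p.leadingCoeff toLex) := by
    rw [esymmAlgHomMonomial, esymmAlgHom_apply]
  have hdm : ∀ k, (monomial t' (p.leadingCoeff toLex)).degreeOf k ≤ d := by
    intro k
    refine le_trans ?_ (htk k)
    classical
    rcases eq_or_ne (p.leadingCoeff toLex) 0 with hc | hc
    · simp [hc]
    · rw [degreeOf_monomial_eq _ _ hc]
  obtain he | hne := eq_or_ne p (esymmAlgHomMonomial _ t' <| p.leadingCoeff toLex)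
  · exact ⟨monomial t' (p.leadingCoeff toLex), hdm, by rw [hmono, ← he]⟩
  have hlt := (supDegree_sub_lt_of_leadingCoeff_eq toLex.injective hdsup.symm ?_).resolve_right hne
  · set p' := p - esymmAlgHomMonomial (Fin n) t' (p.leadingCoeff toLex) with hp'
    have hsym' : p'.IsSymmetric := hp.sub (isSymmetric_esymmAlgHomMonomial _ _)
    obtain ⟨P', hP', hev⟩ := ih _ hlt p' rfl hsym' ((lex_le_first hn hlt.le).trans hd)
    refine ⟨P' + monomial t' (p.leadingCoeff toLex), fun k => ?_, ?_⟩
    · exact le_trans (degreeOf_add_le _ _ _) (max_le (hP' k) (hdm k))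
    · rw [map_add, hev, hmono, hp']; ring
  · rw [leadingCoeff_esymmAlgHomMonomial t' le_rfl]

/-- Every symmetric polynomial `H ∈ F_q[X_1,...,X_n]` with all variable degrees `< q` can be
written as `P(e_1,...,e_n)` for a polynomial `P` with all variable degrees `< q`. -/
theorem stmt13 (q n : ℕ) (hq : IsPrimePow q) (hn : 1 ≤ n)
    (F : Type) [Field F] [Fintype F] (hF : Fintype.card F = q)
    (H : MvPolynomial (Fin n) F) (hsym : H.IsSymmetric)
    (hdeg : ∀ i : Fin n, H.degreeOf i < q) :
    ∃ P : MvPolynomial (Fin n) F,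
      (∀ i : Fin n, P.degreeOf i < q) ∧
      H = bind₁ (fun k : Fin n => esymm (Fin n) F ((k : ℕ) + 1)) P := by
  have hq1 : 1 < q := hq.one_lt
  have hn0 : 0 < n := hn
  have hbase : ofLex (AddMonoidAlgebra.supDegree toLex H) ⟨0, hn0⟩ ≤ q - 1 := by
    rcases eq_or_ne H 0 with rfl | h0
    · rw [AddMonoidAlgebra.supDegree_zero, bot_eq_zero]
      simp
    · obtain ⟨a, ha, he⟩ := AddMonoidAlgebra.exists_supDegree_mem_support toLex h0
      rw [he, ofLex_toLex]
      exact le_trans (monomial_le_degreeOf _ ha) (Nat.le_sub_one_of_lt (hdeg _))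
  obtain ⟨P, hP, hev⟩ := aux13 hn0 (AddMonoidAlgebra.supDegree toLex H) H rfl hsym hbase
  refine ⟨P, fun i => lt_of_le_of_lt (hP i) (by omega), ?_⟩
  exact hev.symm
end
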